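/- For n ≥ 1, the identity Σ_{k=1}^{n} k² · (n-1)!/(n-k)! · n^(n-k-1) = n^(n-1) + (n-1)! · Σ_{j=0}^{n-2} n^j/j! holds; both sides count the connected endofunctions on {1,...,n}. -/

import Mathlib

def ConnFun {n : ℕ} (f : Fin n → Fin n) : Prop :=
  Nonempty (Fin n) ∧ ∀ i j, Relation.EqvGen (fun a b => f a = b) i j

open Finset Function
open scoped Classical

variable {n : ℕ}


private def aa (n i : ℕ) : ℕ := (n-1).descFactorial i * n^(n-1-i)

private lemma aa_top (n : ℕ) (hn : 1 ≤ n) : aa n n = 0 := by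
  unfold aa
  have : (n-1).descFactorial n = 0 := Nat.descFactorial_eq_zero_iff_lt.2 (by omega)
  simp [this]

private lemma key_step (n i : ℕ) (hi : i < n) :
    n * aa n (i+1) = (n-1-i) * aa n i := by
  unfold aa
  rw [Nat.descFactorial_succ]
  rcases Nat.lt_or_ge i (n-1) with h | h
  · have h1 : n - 1 - (i+1) + 1 = n - 1 - i := by omega
    calc n * ((n - 1 - i) * (n-1).descFactorial i * n ^ (n - 1 - (i + 1)))
        = (n-1-i) * ((n-1).descFactorial i * (n ^ (n - 1 - (i+1)) * n)) := by ring
      _ = (n-1-i) * ((n-1).descFactorial i * n ^ (n-1-i)) := by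
          rw [← pow_succ, h1]
      _ = _ := by ring
  · have : n - 1 - i = 0 := by omega
    simp [this]

private lemma sum_sq_eq (n : ℕ) (hn : 1 ≤ n) :
    ∑ i ∈ range n, (i+1)^2 * aa n i = n * ∑ i ∈ range n, aa n i := by
  have per : ∀ i ∈ range n,
      (i+1)^2 * aa n i + (i+1) * (n * aa n (i+1)) = n * ((i+1) * aa n i) := by
    intro i hi
    rw [key_step n i (mem_range.1 hi)]
    have h : (i+1) + (n-1-i) = n := by have := mem_range.1 hi; omega
    calc (i+1)^2 * aa n i + (i+1) * ((n-1-i) * aa n i)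
        = (i+1) * aa n i * ((i+1) + (n-1-i)) := by ring
      _ = n * ((i+1) * aa n i) := by rw [h]; ring
  have hsum := Finset.sum_congr rfl per
  rw [Finset.sum_add_distrib] at hsum
  -- ∑ (i+1) * (n * aa (i+1)) = n * ∑ (i+1) * aa (i+1)
  have h2 : ∑ i ∈ range n, (i+1) * (n * aa n (i+1)) = n * ∑ i ∈ range n, (i+1) * aa n (i+1) := by
    rw [Finset.mul_sum]; apply Finset.sum_congr rfl; intros; ring
  have h3 : ∑ i ∈ range n, (i+1) * aa n (i+1) = ∑ i ∈ range n, i * aa n i := by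
    have := Finset.sum_range_succ' (fun i => i * aa n i) n
    rw [Finset.sum_range_succ (fun i => i * aa n i) n] at this
    simp only [aa_top n hn, Nat.mul_zero, Nat.zero_mul, Nat.add_zero] at this
    omega
  have h4 : ∑ i ∈ range n, n * ((i+1) * aa n i)
      = n * ∑ i ∈ range n, i * aa n i + n * ∑ i ∈ range n, aa n i := by
    rw [← Finset.mul_sum, ← Nat.mul_add]
    congr 1
    rw [← Finset.sum_add_distrib]
    apply Finset.sum_congr rfl; intros; ring
  rw [h2, h3, h4] at hsum
  omega

/-- Part A arithmetic identity -/
lemma sumIcc_shift (n : ℕ) (f : ℕ → ℕ) : ∑ k ∈ Icc 1 n, f k = ∑ i ∈ range n, f (i+1) := by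
  apply Finset.sum_nbij' (fun k => k - 1) (fun i => i + 1) <;> intros <;>
    simp_all [Finset.mem_Icc, Finset.mem_range] <;> omega

private lemma partA (n : ℕ) (hn : 1 ≤ n) :
    ∑ k ∈ Finset.Icc 1 n, k ^ 2 * (n - 1).descFactorial (k - 1) * n ^ (n - k) =
        n ^ n + n * ∑ j ∈ Finset.range (n - 1), (n - 1).descFactorial (n - 1 - j) * n ^ j := by
  have hL : ∑ k ∈ Finset.Icc 1 n, k ^ 2 * (n - 1).descFactorial (k - 1) * n ^ (n - k)
      = ∑ i ∈ range n, (i+1)^2 * aa n i := by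
    rw [sumIcc_shift]
    apply Finset.sum_congr rfl
    intro i hi
    have hi' : i < n := mem_range.1 hi
    unfold aa
    have e1 : i + 1 - 1 = i := by omega
    have e2 : n - (i+1) = n - 1 - i := by omega
    rw [e1, e2, Nat.mul_assoc]
  have hR : ∑ i ∈ range n, aa n i
      = n^(n-1) + ∑ j ∈ Finset.range (n - 1), (n - 1).descFactorial (n - 1 - j) * n ^ j := by
    have hrefl := Finset.sum_range_reflect (fun j => (n - 1).descFactorial (n - 1 - j) * n ^ j) n
    have h0 : ∑ i ∈ range n, aa n i
        = ∑ j ∈ range n, (n - 1).descFactorial (n - 1 - j) * n ^ j := by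
      rw [← hrefl]
      apply Finset.sum_congr rfl
      intro i hi
      have hi' : i < n := mem_range.1 hi
      unfold aa
      congr 2
      omega
    obtain ⟨m, rfl⟩ : ∃ m, n = m + 1 := ⟨n - 1, by omega⟩
    rw [h0]
    rw [show m + 1 = (m) + 1 from rfl, Finset.sum_range_succ]
    simp [Nat.descFactorial]
    omega
  rw [hL, sum_sq_eq n hn, hR, Nat.mul_add, ← pow_succ']
  congr 2
  omega


/-- `x` lies on a cycle of `f` staying inside `B`. -/
def cyc (B : Finset (Fin n)) (f : Fin n → Fin n) (x : Fin n) : Prop :=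
  ∃ k, 0 < k ∧ f^[k] x = x ∧ ∀ j < k, f^[j] x ∈ B

/-- `f` has no cycle inside `B`. -/
def Acy (B : Finset (Fin n)) (f : Fin n → Fin n) : Prop := ∀ x, ¬ cyc B f x

/-- Maps supported on `B` with no cycle inside `B`. -/
def AcyMaps (n : ℕ) (B : Finset (Fin n)) : Type :=
  {f : Fin n → Fin n // (∀ x, x ∉ B → f x = x) ∧ Acy B f}

instance (B : Finset (Fin n)) : Finite (AcyMaps n B) :=
  Subtype.finite

lemma cyc_mem {B : Finset (Fin n)} {f : Fin n → Fin n} {x : Fin n} (h : cyc B f x) : x ∈ B := by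
  obtain ⟨k, hk, _, hj⟩ := h
  simpa using hj 0 hk

lemma cyc_apply {B : Finset (Fin n)} {f : Fin n → Fin n} {x : Fin n} (h : cyc B f x) :
    cyc B f (f x) := by
  obtain ⟨k, hk, hfix, hj⟩ := h
  refine ⟨k, hk, ?_, ?_⟩
  · rw [← iterate_succ_apply, iterate_succ_apply', hfix]
  · intro j hjk
    rw [← iterate_succ_apply]
    rcases Nat.lt_or_ge (j+1) k with h' | h'
    · exact hj _ h'
    · have hjk1 : j + 1 = k := by omega
      rw [show j.succ = j + 1 from rfl, hjk1, hfix]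
      simpa using hj 0 hk

lemma cyc_fix_mul {f : Fin n → Fin n} {x : Fin n} {k : ℕ} (hfix : f^[k] x = x) (q : ℕ) :
    f^[k * q] x = x := by
  rw [Function.iterate_mul]
  exact Function.iterate_fixed hfix q

lemma cyc_inj {B : Finset (Fin n)} {f : Fin n → Fin n} {x y : Fin n}
    (hx : cyc B f x) (hy : cyc B f y) (hxy : f x = f y) : x = y := by
  obtain ⟨k, hk, hkf, -⟩ := hx
  obtain ⟨l, hl, hlf, -⟩ := hy
  have hxK : f^[k * l] x = x := cyc_fix_mul hkf l
  have hyK : f^[k * l] y = y := by rw [Nat.mul_comm]; exact cyc_fix_mul hlf k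
  have hK : k * l = (k * l - 1) + 1 := by
    have : 1 ≤ k * l := Nat.one_le_iff_ne_zero.2 (by positivity)
    omega
  have hx1 : f^[k*l] x = f^[k*l - 1] (f x) := by
    conv_lhs => rw [hK, iterate_succ_apply]
  have hy1 : f^[k*l] y = f^[k*l - 1] (f y) := by
    conv_lhs => rw [hK, iterate_succ_apply]
  calc x = f^[k*l] x := hxK.symm
    _ = f^[k*l - 1] (f x) := hx1
    _ = f^[k*l - 1] (f y) := by rw [hxy]
    _ = f^[k*l] y := hy1.symm
    _ = y := hyK

/-- iterates agree if functions agree on the visited points -/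
lemma iterate_agree {f g : Fin n → Fin n} {S : Finset (Fin n)}
    (hfg : ∀ y ∈ S, f y = g y) {x : Fin n} {k : ℕ}
    (hx : ∀ j < k, f^[j] x ∈ S) : ∀ j ≤ k, f^[j] x = g^[j] x := by
  intro j hj
  induction j with
  | zero => rfl
  | succ j ih =>
    rw [iterate_succ_apply', iterate_succ_apply', ← ih (by omega),
      hfg _ (hx j (by omega))]

lemma cyc_congr {B : Finset (Fin n)} {f g : Fin n → Fin n}
    (hfg : ∀ y ∈ B, f y = g y) {x : Fin n} (h : cyc B f x) : cyc B g x := by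
  obtain ⟨k, hk, hfix, hj⟩ := h
  have := iterate_agree hfg (fun j hjk => hj j hjk)
  exact ⟨k, hk, by rw [← this k le_rfl]; exact hfix,
    fun j hjk => by rw [← this j (by omega)]; exact hj j hjk⟩

lemma iterate_mem_of_closed {f : Fin n → Fin n} {S : Finset (Fin n)}
    (hS : ∀ y ∈ S, f y ∈ S) {x : Fin n} (hx : x ∈ S) (a : ℕ) : f^[a] x ∈ S := by
  induction a with
  | zero => exact hx
  | succ a ih => rw [iterate_succ_apply']; exact hS _ ih

lemma iterate_mod {f : Fin n → Fin n} {x : Fin n} {k : ℕ} (hk : 0 < k)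
    (hfix : f^[k] x = x) (a : ℕ) : f^[a] x = f^[a % k] x := by
  conv_lhs => rw [show a = a % k + k * (a / k) from (Nat.mod_add_div a k).symm]
  rw [Function.iterate_add_apply, cyc_fix_mul hfix]

-- new material
lemma cyc_mono {B B' : Finset (Fin n)} (h : B ⊆ B') {f : Fin n → Fin n} {x : Fin n}
    (hx : cyc B f x) : cyc B' f x := by
  obtain ⟨k, hk, hfix, hj⟩ := hx
  exact ⟨k, hk, hfix, fun j hjk => h (hj j hjk)⟩

noncomputable def cycFinset (B : Finset (Fin n)) (f : Fin n → Fin n) : Finset (Fin n) :=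
  univ.filter (cyc B f)

lemma mem_cycFinset {B : Finset (Fin n)} {f : Fin n → Fin n} {x : Fin n} :
    x ∈ cycFinset B f ↔ cyc B f x := by simp [cycFinset]

lemma cycFinset_subset {B : Finset (Fin n)} {f : Fin n → Fin n} : cycFinset B f ⊆ B :=
  fun x hx => cyc_mem (mem_cycFinset.1 hx)

def SuppMaps (n : ℕ) (B : Finset (Fin n)) : Type :=
  {f : Fin n → Fin n // ∀ x, x ∉ B → f x = x}
instance (B : Finset (Fin n)) : Finite (SuppMaps n B) := Subtype.finite

noncomputable def glue (P : Finset (Fin n)) (σ : Equiv.Perm {x // x ∈ P})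
    (g : Fin n → Fin n) : Fin n → Fin n :=
  fun x => if h : x ∈ P then (σ ⟨x, h⟩ : Fin n) else g x

lemma glue_mem {P : Finset (Fin n)} {σ : Equiv.Perm {x // x ∈ P}} {g : Fin n → Fin n}
    {x : Fin n} (h : x ∈ P) : glue P σ g x = (σ ⟨x, h⟩ : Fin n) := dif_pos h

lemma glue_not_mem {P : Finset (Fin n)} {σ : Equiv.Perm {x // x ∈ P}} {g : Fin n → Fin n}
    {x : Fin n} (h : x ∉ P) : glue P σ g x = g x := dif_neg h

lemma glue_maps {P : Finset (Fin n)} {σ : Equiv.Perm {x // x ∈ P}} {g : Fin n → Fin n}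
    {x : Fin n} (h : x ∈ P) : glue P σ g x ∈ P := by
  rw [glue_mem h]; exact (σ ⟨x, h⟩).2

lemma glue_iter {P : Finset (Fin n)} {σ : Equiv.Perm {x // x ∈ P}} {g : Fin n → Fin n}
    {x : Fin n} (h : x ∈ P) (k : ℕ) :
    (glue P σ g)^[k] x = (((σ ^ k) ⟨x, h⟩ : {x // x ∈ P}) : Fin n) := by
  induction k with
  | zero => simp
  | succ k ih =>
    rw [iterate_succ_apply', ih, glue_mem (((σ ^ k) ⟨x, h⟩).2), pow_succ']
    simp [Equiv.Perm.mul_apply]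

lemma cyc_glue_of_mem {P : Finset (Fin n)} {σ : Equiv.Perm {x // x ∈ P}} {g : Fin n → Fin n}
    (B : Finset (Fin n)) (hPB : P ⊆ B) {x : Fin n} (h : x ∈ P) : cyc B (glue P σ g) x := by
  refine ⟨orderOf σ, orderOf_pos σ, ?_, ?_⟩
  · rw [glue_iter h, pow_orderOf_eq_one]; rfl
  · intro j _
    rw [glue_iter h]
    exact hPB ((σ ^ j) ⟨x, h⟩).2

lemma cycFinset_glue {B P : Finset (Fin n)} (hPB : P ⊆ B) (σ : Equiv.Perm {x // x ∈ P})
    (g : Fin n → Fin n) (hg : (∀ x, x ∉ B \ P → g x = x) ∧ Acy (B \ P) g) :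
    cycFinset B (glue P σ g) = P := by
  ext x
  rw [mem_cycFinset]
  constructor
  · intro hx
    by_contra hxP
    obtain ⟨k, hk, hfix, hj⟩ := hx
    -- no iterate < k can be in P
    have hnotP : ∀ j ≤ k, (glue P σ g)^[j] x ∉ P := by
      intro j hjk hmem
      have : (glue P σ g)^[k - j] ((glue P σ g)^[j] x) ∈ P :=
        iterate_mem_of_closed (fun y hy => glue_maps hy) hmem (k - j)
      rw [← Function.iterate_add_apply, show k - j + j = k by omega, hfix] at this
      exact hxP this
    have hcyc' : cyc (B \ P) (glue P σ g) x := by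
      refine ⟨k, hk, hfix, fun j hjk => ?_⟩
      rw [Finset.mem_sdiff]
      exact ⟨hj j hjk, hnotP j (by omega)⟩
    have : cyc (B \ P) g x := by
      refine cyc_congr (fun y hy => ?_) hcyc'
      rw [glue_not_mem (fun hP => (Finset.mem_sdiff.1 hy).2 hP)]
    exact hg.2 x this
  · intro hx
    exact cyc_glue_of_mem B hPB hx

/-- The fiber equivalence -/
noncomputable def fiberEquiv (B P : Finset (Fin n)) (hPB : P ⊆ B) :
    {f : SuppMaps n B // cycFinset B f.1 = P} ≃
      Equiv.Perm {x // x ∈ P} × AcyMaps n (B \ P) := by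
  refine Equiv.mk (fun F => (?_, ?_)) (fun pr => ?_) ?_ ?_
  · -- permutation part
    refine Equiv.ofBijective (fun x => ⟨F.1.1 x.1, ?_⟩) ?_
    · have hx : cyc B F.1.1 x.1 := mem_cycFinset.1 (by rw [F.2]; exact x.2)
      have h2 : F.1.1 x.1 ∈ cycFinset B F.1.1 := mem_cycFinset.2 (cyc_apply hx)
      rw [F.2] at h2
      exact h2
    · rw [← Finite.injective_iff_bijective]
      intro a b hab
      have ha : cyc B F.1.1 a.1 := mem_cycFinset.1 (by rw [F.2]; exact a.2)
      have hb : cyc B F.1.1 b.1 := mem_cycFinset.1 (by rw [F.2]; exact b.2)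
      exact Subtype.ext (cyc_inj ha hb (congrArg Subtype.val hab))
  · -- acyclic part
    refine ⟨fun x => if x ∈ B \ P then F.1.1 x else x, fun x hx => if_neg hx, ?_⟩
    intro x hx
    have : cyc (B \ P) F.1.1 x := by
      refine cyc_congr (fun y hy => ?_) hx
      · rw [if_pos hy]
    have hx' : x ∈ P := by
      rw [← F.2, mem_cycFinset]
      exact cyc_mono (Finset.sdiff_subset) this
    exact (Finset.mem_sdiff.1 (cyc_mem hx)).2 hx'
  · -- inverse: glue
    refine ⟨⟨glue P pr.1 pr.2.1, fun x hx => ?_⟩, cycFinset_glue hPB pr.1 pr.2.1 pr.2.2⟩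
    rw [glue_not_mem (fun hP => hx (hPB hP)), pr.2.2.1 x (fun hBP => hx (Finset.mem_sdiff.1 hBP).1)]
  · -- left inverse
    intro F
    apply Subtype.ext; apply Subtype.ext
    funext x
    show glue P _ _ x = F.1.1 x
    by_cases hx : x ∈ P
    · rw [glue_mem hx]; rfl
    · rw [glue_not_mem hx]
      show (if x ∈ B \ P then F.1.1 x else x) = F.1.1 x
      by_cases hxB : x ∈ B \ P
      · rw [if_pos hxB]
      · rw [if_neg hxB]
        have hxB' : x ∉ B := fun h => hxB (Finset.mem_sdiff.2 ⟨h, hx⟩)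
        exact (F.1.2 x hxB').symm
  · -- right inverse
    intro pr
    obtain ⟨σ, g, hg⟩ := pr
    refine Prod.ext ?_ ?_
    · apply Equiv.ext
      intro x
      apply Subtype.ext
      show glue P σ g x.1 = (σ x).1
      rw [glue_mem x.2]
    · apply Subtype.ext
      funext x
      show (if x ∈ B \ P then glue P σ g x else x) = g x
      by_cases hx : x ∈ B \ P
      · rw [if_pos hx, glue_not_mem (Finset.mem_sdiff.1 hx).2]
      · rw [if_neg hx, hg.1 x hx]


----- counting -----

lemma nat_card_sigma' {ι : Type*} [Fintype ι] (F : ι → Type*) [∀ i, Finite (F i)] :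
    Nat.card ((i : ι) × F i) = ∑ i, Nat.card (F i) := by
  letI : ∀ i, Fintype (F i) := fun i => Fintype.ofFinite _
  simp [Nat.card_eq_fintype_card, Fintype.card_sigma]

noncomputable def suppEquiv (B : Finset (Fin n)) : SuppMaps n B ≃ ({x // x ∈ B} → Fin n) where
  toFun f x := f.1 x.1
  invFun h := ⟨fun y => if hy : y ∈ B then h ⟨y, hy⟩ else y, fun y hy => dif_neg hy⟩
  left_inv f := Subtype.ext (funext fun y => by
    by_cases hy : y ∈ B
    · simp [hy]
    · simp [hy, f.2 y hy])
  right_inv h := funext fun x => by simp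

lemma card_suppMaps (B : Finset (Fin n)) : Nat.card (SuppMaps n B) = n ^ B.card := by
  rw [Nat.card_congr (suppEquiv B)]
  simp [Nat.card_eq_fintype_card]

lemma card_fiber_eq (B P : Finset (Fin n)) (hPB : P ⊆ B) :
    Nat.card {F : SuppMaps n B // cycFinset B F.1 = P}
      = Nat.factorial P.card * Nat.card (AcyMaps n (B \ P)) := by
  rw [Nat.card_congr (fiberEquiv B P hPB), Nat.card_prod]
  congr 1
  rw [Nat.card_eq_fintype_card]
  simp [Fintype.card_perm]

lemma card_fiber_zero (B P : Finset (Fin n)) (hPB : ¬ P ⊆ B) :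
    Nat.card {F : SuppMaps n B // cycFinset B F.1 = P} = 0 := by
  have : IsEmpty {F : SuppMaps n B // cycFinset B F.1 = P} := by
    refine ⟨fun F => hPB ?_⟩
    rw [← F.2]
    exact cycFinset_subset
  exact Nat.card_of_isEmpty

lemma supp_decomp (B : Finset (Fin n)) :
    (n : ℕ) ^ B.card = ∑ P ∈ B.powerset, Nat.factorial P.card * Nat.card (AcyMaps n (B \ P)) := by
  rw [← card_suppMaps B,
    ← Nat.card_congr (Equiv.sigmaFiberEquiv (fun F : SuppMaps n B => cycFinset B F.1)),
    nat_card_sigma']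
  rw [← Finset.sum_subset (Finset.subset_univ B.powerset) (fun P _ hP => by
    rw [card_fiber_zero B P (fun h => hP (Finset.mem_powerset.2 h))])]
  exact Finset.sum_congr rfl fun P hP => card_fiber_eq B P (Finset.mem_powerset.1 hP)

----- invariance under relabeling -----

lemma conj_iterate (π : Equiv.Perm (Fin n)) (f : Fin n → Fin n) (k : ℕ) (x : Fin n) :
    (π ∘ f ∘ π.symm)^[k] x = π (f^[k] (π.symm x)) := by
  induction k with
  | zero => simp
  | succ k ih => rw [iterate_succ_apply', ih, iterate_succ_apply']; simp

lemma cyc_conj (π : Equiv.Perm (Fin n)) {B : Finset (Fin n)} {f : Fin n → Fin n} {x : Fin n}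
    (h : cyc B f x) : cyc (B.image π) (π ∘ f ∘ π.symm) (π x) := by
  obtain ⟨k, hk, hfix, hj⟩ := h
  refine ⟨k, hk, ?_, ?_⟩
  · rw [conj_iterate]; simp [hfix]
  · intro j hjk
    rw [conj_iterate]
    simp only [Equiv.symm_apply_apply]
    exact Finset.mem_image_of_mem π (hj j hjk)

noncomputable def acyConj (π : Equiv.Perm (Fin n)) (B : Finset (Fin n)) :
    AcyMaps n B → AcyMaps n (B.image π) := fun f =>
  ⟨π ∘ f.1 ∘ π.symm, by
    constructor
    · intro x hx
      have hx' : π.symm x ∉ B := by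
        intro h
        exact hx (Finset.mem_image.2 ⟨π.symm x, h, by simp⟩)
      simp [f.2.1 _ hx']
    · intro x hx
      have : cyc ((B.image π).image π.symm) (π.symm ∘ (π ∘ f.1 ∘ π.symm) ∘ π.symm.symm) (π.symm x) :=
        cyc_conj π.symm hx
      have him : (B.image π).image π.symm = B := by
        simp [Finset.image_image]
      have hfun : (π.symm ∘ (π ∘ f.1 ∘ π.symm) ∘ π.symm.symm) = f.1 := by
        funext y; simp
      rw [him, hfun] at this
      exact f.2.2 _ this⟩

lemma acyConj_inv (π : Equiv.Perm (Fin n)) (B : Finset (Fin n)) (f : AcyMaps n B) :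
    (acyConj π.symm (B.image π) (acyConj π B f)).1 = f.1 := by
  have him : (B.image π).image π.symm = B := by simp [Finset.image_image]
  funext y
  simp [acyConj]

lemma card_acyMaps_image (π : Equiv.Perm (Fin n)) (B : Finset (Fin n)) :
    Nat.card (AcyMaps n (B.image π)) = Nat.card (AcyMaps n B) := by
  have him : (B.image π).image π.symm = B := by simp [Finset.image_image]
  refine (Nat.card_congr (Equiv.ofBijective (acyConj π B) ⟨?_, ?_⟩)).symm
  · intro f g hfg
    apply Subtype.ext
    rw [← acyConj_inv π B f, ← acyConj_inv π B g, hfg]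
  · intro F
    have hc := (acyConj π.symm (B.image π) F).2
    have hcg : (acyConj π.symm (B.image π) F).1 = π.symm ∘ F.1 ∘ π := rfl
    rw [hcg, him] at hc
    refine ⟨⟨π.symm ∘ F.1 ∘ π, hc.1, hc.2⟩, ?_⟩
    apply Subtype.ext
    show π ∘ (π.symm ∘ F.1 ∘ π) ∘ π.symm = F.1
    funext y; simp

lemma card_acyMaps_eq_of_card_eq {B C : Finset (Fin n)} (h : B.card = C.card) :
    Nat.card (AcyMaps n B) = Nat.card (AcyMaps n C) := by
  have h' : Bᶜ.card = Cᶜ.card := by rw [Finset.card_compl, Finset.card_compl, h]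
  let eB : {x // x ∈ B} ≃ {x // x ∈ C} := Finset.equivOfCardEq h
  let eBc : {x // x ∈ Bᶜ} ≃ {x // x ∈ Cᶜ} := Finset.equivOfCardEq h'
  let e1 : ↥(B : Set (Fin n)) ≃ ↥(C : Set (Fin n)) :=
    (Equiv.subtypeEquivRight (fun x => Finset.mem_coe)).trans
      (eB.trans (Equiv.subtypeEquivRight (fun x => Finset.mem_coe.symm)))
  let e2 : ↥((B : Set (Fin n))ᶜ) ≃ ↥((C : Set (Fin n))ᶜ) :=
    (Equiv.subtypeEquivRight (fun x => by simp)).trans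
      (eBc.trans (Equiv.subtypeEquivRight (fun x => by simp)))
  let π : Equiv.Perm (Fin n) :=
    (Equiv.Set.sumCompl (B : Set (Fin n))).symm.trans
      ((Equiv.sumCongr e1 e2).trans (Equiv.Set.sumCompl (C : Set (Fin n))))
  have hπ : ∀ x, x ∈ B ↔ π x ∈ C := by
    intro x
    by_cases hx : x ∈ B
    · have hx' : x ∈ (B : Set (Fin n)) := hx
      have hval : π x = (e1 ⟨x, hx'⟩ : Fin n) := by
        show (Equiv.Set.sumCompl (C : Set (Fin n)))
          (Sum.map ⇑e1 ⇑e2 ((Equiv.Set.sumCompl (B : Set (Fin n))).symm x)) = _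
        rw [Equiv.Set.sumCompl_symm_apply_of_mem hx']
        rfl
      rw [hval]
      exact iff_of_true hx (Finset.mem_coe.1 (e1 ⟨x, hx'⟩).2)
    · have hx' : x ∉ (B : Set (Fin n)) := hx
      have hval : π x = (e2 ⟨x, hx'⟩ : Fin n) := by
        show (Equiv.Set.sumCompl (C : Set (Fin n)))
          (Sum.map ⇑e1 ⇑e2 ((Equiv.Set.sumCompl (B : Set (Fin n))).symm x)) = _
        rw [Equiv.Set.sumCompl_symm_apply_of_notMem hx']
        rfl
      rw [hval]
      have h2 := (e2 ⟨x, hx'⟩).2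
      simp only [Set.mem_compl_iff, Finset.mem_coe] at h2
      exact iff_of_false hx h2
  have himg : B.image π = C := by
    ext y
    simp only [Finset.mem_image]
    constructor
    · rintro ⟨x, hx, rfl⟩
      exact (hπ x).1 hx
    · intro hy
      exact ⟨π.symm y, by rw [hπ (π.symm y)]; simpa using hy, by simp⟩
  rw [← himg, card_acyMaps_image]

----- the count MM and its closed form -----

noncomputable def MM (n b : ℕ) : ℕ :=
  Nat.card (AcyMaps n (univ.filter (fun y : Fin n => (y : ℕ) < b)))

lemma card_canon (b : ℕ) (hb : b ≤ n) :
    (univ.filter (fun y : Fin n => (y : ℕ) < b)).card = b := by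
  apply Finset.card_eq_of_bijective (fun i hi => (⟨i, lt_of_lt_of_le hi hb⟩ : Fin n))
  · intro a ha
    have ha' : (a : ℕ) < b := by simpa using ha
    exact ⟨a.1, ha', by simp⟩
  · intro i hi
    simp [hi]
  · intro i j hi hj hij
    simpa using congrArg Fin.val hij

lemma card_acyMaps (B : Finset (Fin n)) : Nat.card (AcyMaps n B) = MM n B.card := by
  apply card_acyMaps_eq_of_card_eq
  rw [card_canon]
  have := Finset.card_le_univ B
  simpa using this

lemma MM_recurrence (b : ℕ) (hb : b ≤ n) :
    (n : ℕ) ^ b = ∑ p ∈ range (b+1), Nat.choose b p * Nat.factorial p * MM n (b - p) := by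
  set B := univ.filter (fun y : Fin n => (y : ℕ) < b) with hBdef
  have hB : B.card = b := card_canon b hb
  have hd := supp_decomp B
  rw [hB] at hd
  rw [hd, Finset.sum_powerset, hB]
  apply Finset.sum_congr rfl
  intro p hp
  have hterm : ∀ P ∈ Finset.powersetCard p B,
      Nat.factorial P.card * Nat.card (AcyMaps n (B \ P)) = Nat.factorial p * MM n (b - p) := by
    intro P hP
    obtain ⟨hPB, hPc⟩ := Finset.mem_powersetCard.1 hP
    rw [hPc, card_acyMaps, Finset.card_sdiff_of_subset hPB, hB, hPc]
  rw [Finset.sum_congr rfl hterm, Finset.sum_const, Finset.card_powersetCard, hB,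
    smul_eq_mul, Nat.mul_assoc]

/-- the closed-form candidate -/
def cand (n b : ℕ) : ℕ := if b = 0 then 1 else (n - b) * n ^ (b - 1)

lemma tel (b : ℕ) (hb : b ≤ n) : ∀ Q, Q ≤ b →
    ∑ q ∈ range (Q+1), Nat.descFactorial b (b - q) * cand n q
      = Nat.descFactorial b (b - Q) * n ^ Q := by
  intro Q hQ
  induction Q with
  | zero => simp [cand]
  | succ Q ih =>
    rw [Finset.sum_range_succ, ih (by omega)]
    have h1 : b - Q = (b - (Q+1)) + 1 := by omega
    rw [h1, Nat.descFactorial_succ, show b - (b - (Q+1)) = Q + 1 by omega]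
    have hc : cand n (Q+1) = (n - (Q+1)) * n ^ Q := by simp [cand]
    rw [hc]
    set D := Nat.descFactorial b (b - (Q+1))
    calc (Q+1) * D * n ^ Q + D * ((n - (Q+1)) * n ^ Q)
        = D * n ^ Q * ((Q+1) + (n - (Q+1))) := by ring
      _ = D * n ^ Q * n := by rw [show (Q+1) + (n - (Q+1)) = n by omega]
      _ = D * n ^ (Q+1) := by rw [pow_succ]; ring

lemma cand_recurrence (b : ℕ) (hb : b ≤ n) :
    (n : ℕ) ^ b = ∑ p ∈ range (b+1), Nat.choose b p * Nat.factorial p * cand n (b - p) := by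
  have hre := Finset.sum_range_reflect (fun q => Nat.descFactorial b (b - q) * cand n q) (b+1)
  have h2 : ∀ p ∈ range (b+1),
      Nat.choose b p * Nat.factorial p * cand n (b - p)
        = Nat.descFactorial b (b - (b - p)) * cand n (b - p) := by
    intro p hp
    have hpb : p ≤ b := by have := Finset.mem_range.1 hp; omega
    rw [show b - (b - p) = p by omega, Nat.descFactorial_eq_factorial_mul_choose]
    ring
  rw [Finset.sum_congr rfl h2]
  have h3 : ∀ j ∈ range (b+1),
      Nat.descFactorial b (b - (b + 1 - 1 - j)) * cand n (b + 1 - 1 - j)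
        = Nat.descFactorial b (b - (b - j)) * cand n (b - j) := by
    intro j hj
    congr 2 <;> omega
  rw [show (∑ p ∈ range (b+1), Nat.descFactorial b (b - (b - p)) * cand n (b - p))
      = ∑ j ∈ range (b+1), Nat.descFactorial b (b - (b+1-1-j)) * cand n (b+1-1-j) from
      (Finset.sum_congr rfl h3).symm]
  rw [hre, tel b hb b le_rfl]
  simp

lemma MM_eq_cand : ∀ b, b ≤ n → MM n b = cand n b := by
  intro b
  induction b using Nat.strong_induction_on with
  | _ b ih =>
    intro hb
    have h1 := MM_recurrence b hb
    have h2 := cand_recurrence b hb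
    rcases Nat.eq_zero_or_pos b with rfl | hbpos
    · simp at h1
      simp [cand, ← h1]
    · rw [Finset.sum_range_succ'] at h1 h2
      have hih : ∀ p ∈ range b,
          Nat.choose b (p+1) * Nat.factorial (p+1) * MM n (b - (p+1))
            = Nat.choose b (p+1) * Nat.factorial (p+1) * cand n (b - (p+1)) := by
        intro p hp
        rw [ih (b - (p+1)) (by omega) (by omega)]
      rw [Finset.sum_congr rfl hih] at h1
      rw [h1] at h2
      simpa using h2

----- connected endofunctions -----

lemma eqvGen_self_iterate (f : Fin n → Fin n) (x : Fin n) (k : ℕ) :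
    Relation.EqvGen (fun a b => f a = b) x (f^[k] x) := by
  induction k with
  | zero => exact .refl x
  | succ k ih =>
    refine .trans _ _ _ ih ?_
    rw [iterate_succ_apply']
    exact .rel _ _ rfl

lemma eqvGen_iff_merge {f : Fin n → Fin n} {i j : Fin n} :
    Relation.EqvGen (fun a b => f a = b) i j ↔ ∃ a b, f^[a] i = f^[b] j := by
  constructor
  · intro h
    induction h with
    | rel a b hab => exact ⟨1, 0, by simpa using hab⟩
    | refl a => exact ⟨0, 0, rfl⟩
    | symm a b _ ih => obtain ⟨s, t, h1⟩ := ih; exact ⟨t, s, h1.symm⟩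
    | trans a b c _ _ ih1 ih2 =>
      obtain ⟨s, t, h1⟩ := ih1
      obtain ⟨u, v, h2⟩ := ih2
      refine ⟨u + s, t + v, ?_⟩
      calc f^[u + s] a = f^[u] (f^[s] a) := Function.iterate_add_apply f u s a
        _ = f^[u] (f^[t] b) := by rw [h1]
        _ = f^[t] (f^[u] b) := by
            rw [← Function.iterate_add_apply, ← Function.iterate_add_apply, Nat.add_comm]
        _ = f^[t] (f^[v] c) := by rw [h2]
        _ = f^[t + v] c := (Function.iterate_add_apply f t v c).symm
  · rintro ⟨a, b, hab⟩
    refine .trans _ _ _ (eqvGen_self_iterate f i a) ?_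
    rw [hab]
    exact .symm _ _ (eqvGen_self_iterate f j b)

lemma connFun_iff_merge (f : Fin n → Fin n) (z : Fin n) :
    ConnFun f ↔ ∀ y, ∃ a b, f^[a] y = f^[b] z := by
  constructor
  · intro h y
    exact eqvGen_iff_merge.1 (h.2 y z)
  · intro h
    refine ⟨⟨z⟩, fun i j => eqvGen_iff_merge.2 ?_⟩
    obtain ⟨a, b, hab⟩ := h i
    obtain ⟨c, d, hcd⟩ := h j
    refine ⟨d + a, b + c, ?_⟩
    calc f^[d + a] i = f^[d] (f^[a] i) := Function.iterate_add_apply f d a i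
      _ = f^[d] (f^[b] z) := by rw [hab]
      _ = f^[b] (f^[d] z) := by
          rw [← Function.iterate_add_apply, ← Function.iterate_add_apply, Nat.add_comm]
      _ = f^[b] (f^[c] j) := by rw [hcd]
      _ = f^[b + c] j := (Function.iterate_add_apply f b c j).symm

----- the rho-length of the orbit of z -----

lemma exists_repeat (f : Fin n → Fin n) (z : Fin n) :
    ∃ m, ∃ j, j < m ∧ f^[m] z = f^[j] z := by
  have hcard : Fintype.card (Fin n) < Fintype.card (Fin (n + 1)) := by simp
  obtain ⟨s, t, hst, heq⟩ :=
    Fintype.exists_ne_map_eq_of_card_lt (fun i : Fin (n + 1) => f^[i.1] z) hcard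
  rcases Nat.lt_or_ge s.1 t.1 with h | h
  · exact ⟨t.1, s.1, h, heq.symm⟩
  · have : t.1 < s.1 := by
      rcases Nat.lt_or_ge t.1 s.1 with h' | h'
      · exact h'
      · exact absurd (Fin.ext (by omega)) hst
    exact ⟨s.1, t.1, this, heq⟩

noncomputable def rlen (f : Fin n → Fin n) (z : Fin n) : ℕ := Nat.find (exists_repeat f z)

lemma rlen_pos (f : Fin n → Fin n) (z : Fin n) : 0 < rlen f z := by
  rcases Nat.eq_zero_or_pos (rlen f z) with h | h
  · exfalso
    have := Nat.find_spec (exists_repeat f z)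
    rw [show Nat.find (exists_repeat f z) = rlen f z from rfl, h] at this
    obtain ⟨j, hj, _⟩ := this
    omega
  · exact h

lemma rlen_spec (f : Fin n → Fin n) (z : Fin n) :
    ∃ j, j < rlen f z ∧ f^[rlen f z] z = f^[j] z := Nat.find_spec (exists_repeat f z)

lemma rlen_min (f : Fin n → Fin n) (z : Fin n) {m : ℕ} (hm : m < rlen f z) :
    ∀ j < m, f^[m] z ≠ f^[j] z := by
  intro j hj hne
  exact Nat.find_min (exists_repeat f z) hm ⟨j, hj, hne⟩

lemma iter_inj (f : Fin n → Fin n) (z : Fin n) {i j : ℕ} (hi : i < rlen f z)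
    (hj : j < rlen f z) (h : f^[i] z = f^[j] z) : i = j := by
  rcases Nat.lt_trichotomy i j with h' | h' | h'
  · exact absurd h.symm (rlen_min f z hj i h')
  · exact h'
  · exact absurd h (rlen_min f z hi j h')

lemma rlen_le (f : Fin n → Fin n) (z : Fin n) : rlen f z ≤ n := by
  have hinj : Function.Injective (fun i : Fin (rlen f z) => f^[i.1] z) := by
    intro i j hij
    exact Fin.ext (iter_inj f z i.2 j.2 hij)
  have := Fintype.card_le_of_injective _ hinj
  simpa using this

noncomputable def jfind (f : Fin n → Fin n) (z : Fin n) : ℕ := Nat.find (rlen_spec f z)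

lemma jfind_lt (f : Fin n → Fin n) (z : Fin n) : jfind f z < rlen f z :=
  (Nat.find_spec (rlen_spec f z)).1

lemma jfind_spec (f : Fin n → Fin n) (z : Fin n) :
    f^[rlen f z] z = f^[jfind f z] z := (Nat.find_spec (rlen_spec f z)).2

----- classification data -----

def Emb (z : Fin n) (m : Fin n) : Type := {x : Fin (m.1 + 1) ↪ Fin n // x 0 = z}
instance (z m : Fin n) : Finite (Emb z m) := Subtype.finite

noncomputable def chi (f : Fin n → Fin n) (z : Fin n) : Σ m : Fin n, Emb z m :=
  ⟨⟨rlen f z - 1, by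
      have h1 := rlen_pos f z
      have h2 := rlen_le f z
      have h3 := z.pos
      omega⟩,
    ⟨⟨fun i => f^[i.1] z, fun i j hij => Fin.ext (iter_inj f z
        (by have h2 : i.1 < rlen f z - 1 + 1 := i.2; have h1 := rlen_pos f z; omega)
        (by have h2 : j.1 < rlen f z - 1 + 1 := j.2; have h1 := rlen_pos f z; omega) hij)⟩,
      rfl⟩⟩

lemma chi_iff (f : Fin n → Fin n) (z : Fin n) (m : Fin n) (x : Emb z m) :
    chi f z = ⟨m, x⟩ ↔
      (rlen f z = m.1 + 1 ∧ ∀ i : Fin (m.1 + 1), f^[i.1] z = x.1 i) := by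
  constructor
  · intro h
    have h1 : (chi f z).1 = m := congrArg Sigma.fst h
    have h1' : rlen f z - 1 = m.1 := congrArg Fin.val h1
    have hrp := rlen_pos f z
    have hr : rlen f z = m.1 + 1 := by omega
    refine ⟨hr, ?_⟩
    have h2 : HEq (chi f z).2 x := (Sigma.ext_iff.1 h).2
    obtain ⟨mv, hmv⟩ := m
    subst h1'
    have h2' : (chi f z).2 = x := eq_of_heq h2
    intro i
    rw [← h2']
    rfl
  · rintro ⟨h1, h2⟩
    obtain ⟨mv, hmv⟩ := m
    have h1'' : rlen f z = mv + 1 := h1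
    have h1' : rlen f z - 1 = mv := by omega
    subst h1'
    refine Sigma.ext rfl (heq_of_eq ?_)
    apply Subtype.ext
    apply DFunLike.ext
    intro i
    exact h2 i

----- the glued function -----

def stepFn (m : Fin n) (j : Fin (m.1 + 1)) : Fin (m.1 + 1) → Fin (m.1 + 1) :=
  fun i => if h : i.1 + 1 < m.1 + 1 then ⟨i.1 + 1, h⟩ else j

noncomputable def glueC (m : Fin n) (x : Emb z m) (j : Fin (m.1 + 1))
    (g : Fin n → Fin n) : Fin n → Fin n :=
  fun y => if h : ∃ i, x.1 i = y then x.1 (stepFn m j (Classical.choose h)) else g y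

variable {z : Fin n} {m : Fin n}

lemma mem_S {x : Emb z m} {y : Fin n} : y ∈ univ.map x.1 ↔ ∃ i, x.1 i = y := by
  simp [Finset.mem_map]

lemma glueC_apply_x (x : Emb z m) (j : Fin (m.1 + 1)) (g : Fin n → Fin n)
    (i : Fin (m.1 + 1)) : glueC m x j g (x.1 i) = x.1 (stepFn m j i) := by
  have h : ∃ i', x.1 i' = x.1 i := ⟨i, rfl⟩
  rw [glueC, dif_pos h]
  congr 1
  exact congrArg _ (x.1.injective (Classical.choose_spec h))

lemma glueC_apply_nx (x : Emb z m) (j : Fin (m.1 + 1)) (g : Fin n → Fin n)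
    {y : Fin n} (hy : y ∉ univ.map x.1) : glueC m x j g y = g y := by
  rw [glueC, dif_neg]
  intro h
  exact hy (mem_S.2 h)

lemma glueC_iter (x : Emb z m) (j : Fin (m.1 + 1)) (g : Fin n → Fin n) :
    ∀ k (hk : k < m.1 + 1), (glueC m x j g)^[k] z = x.1 ⟨k, hk⟩ := by
  intro k
  induction k with
  | zero => intro hk; exact x.2.symm
  | succ k ih =>
    intro hk
    rw [iterate_succ_apply', ih (by omega), glueC_apply_x]
    congr 1
    rw [stepFn, dif_pos (show k + 1 < m.1 + 1 by omega)]

lemma glueC_top (x : Emb z m) (j : Fin (m.1 + 1)) (g : Fin n → Fin n) :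
    (glueC m x j g)^[m.1 + 1] z = x.1 j := by
  rw [iterate_succ_apply', glueC_iter x j g m.1 (by omega), glueC_apply_x]
  congr 1
  rw [stepFn, dif_neg (show ¬ (m.1 + 1 < m.1 + 1) by omega)]

lemma glueC_S_closed (x : Emb z m) (j : Fin (m.1 + 1)) (g : Fin n → Fin n) :
    ∀ y ∈ univ.map x.1, glueC m x j g y ∈ univ.map x.1 := by
  intro y hy
  obtain ⟨i, rfl⟩ := mem_S.1 hy
  rw [glueC_apply_x]
  exact mem_S.2 ⟨_, rfl⟩

lemma glueC_orbit (x : Emb z m) (j : Fin (m.1 + 1)) (g : Fin n → Fin n) (a : ℕ) :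
    (glueC m x j g)^[a] z ∈ univ.map x.1 :=
  iterate_mem_of_closed (glueC_S_closed x j g) (mem_S.2 ⟨0, x.2⟩) a

lemma glueC_rlen (x : Emb z m) (j : Fin (m.1 + 1)) (g : Fin n → Fin n) :
    rlen (glueC m x j g) z = m.1 + 1 := by
  rw [rlen, Nat.find_eq_iff]
  constructor
  · exact ⟨j.1, j.2, by rw [glueC_top, glueC_iter x j g j.1 j.2]⟩
  · rintro k hk ⟨j', hj', hfix⟩
    rw [glueC_iter x j g k (by omega), glueC_iter x j g j' (by omega)] at hfix
    have := x.1.injective hfix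
    have := congrArg Fin.val this
    simp at this
    omega

lemma glueC_jfind (x : Emb z m) (j : Fin (m.1 + 1)) (g : Fin n → Fin n) :
    jfind (glueC m x j g) z = j.1 := by
  rw [jfind, Nat.find_eq_iff]
  constructor
  · refine ⟨by rw [glueC_rlen]; exact j.2, ?_⟩
    rw [glueC_rlen, glueC_top, glueC_iter x j g j.1 j.2]
  · rintro k hk ⟨hklt, hfix⟩
    rw [glueC_rlen] at hklt
    rw [glueC_rlen, glueC_top, glueC_iter x j g k (by omega)] at hfix
    have := congrArg Fin.val (x.1.injective hfix.symm)
    simp at this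
    omega

lemma exists_cycle_of_no_exit {f : Fin n → Fin n} {T : Finset (Fin n)} {y : Fin n}
    (h : ∀ a, f^[a] y ∈ T) : ∃ w, cyc T f w := by
  obtain ⟨mm, jj, hjm, heq⟩ := exists_repeat f y
  refine ⟨f^[jj] y, mm - jj, by omega, ?_, ?_⟩
  · rw [← Function.iterate_add_apply, show mm - jj + jj = mm by omega, heq]
  · intro r _
    rw [← Function.iterate_add_apply]
    exact h (r + jj)

lemma glueC_conn (x : Emb z m) (j : Fin (m.1 + 1)) (g : Fin n → Fin n)
    (hg : Acy ((univ.map x.1)ᶜ) g) : ConnFun (glueC m x j g) := by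
  rw [connFun_iff_merge _ z]
  intro y
  by_cases hy : ∃ a, (glueC m x j g)^[a] y ∈ univ.map x.1
  · obtain ⟨a, ha⟩ := hy
    obtain ⟨i, hi⟩ := mem_S.1 ha
    exact ⟨a, i.1, by rw [← hi, glueC_iter x j g i.1 i.2]⟩
  · push_neg at hy
    exfalso
    have hy' : ∀ a, (glueC m x j g)^[a] y ∈ (univ.map x.1)ᶜ :=
      fun a => Finset.mem_compl.2 (hy a)
    obtain ⟨w, hw⟩ := exists_cycle_of_no_exit hy'
    refine hg w (cyc_congr (fun y' hy' => ?_) hw)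
    exact glueC_apply_nx x j g (Finset.mem_compl.1 hy')

section forward
variable {f : Fin n → Fin n} {x : Emb z m}
  (hconn : ConnFun f) (hr : rlen f z = m.1 + 1) (hx : ∀ i : Fin (m.1 + 1), f^[i.1] z = x.1 i)

include hr hx in
lemma S_closed_f : ∀ y ∈ univ.map x.1, f y ∈ univ.map x.1 := by
  intro y hy
  obtain ⟨i, rfl⟩ := mem_S.1 hy
  have hfx : f (x.1 i) = f^[i.1 + 1] z := by
    rw [← hx i]; exact (iterate_succ_apply' f i.1 z).symm
  rw [hfx]
  rcases Nat.lt_or_ge (i.1 + 1) (m.1 + 1) with h | h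
  · rw [show f^[i.1+1] z = x.1 ⟨i.1+1, h⟩ from hx ⟨i.1+1, h⟩]
    exact mem_S.2 ⟨_, rfl⟩
  · have hi : i.1 + 1 = m.1 + 1 := by have := i.2; omega
    have hjlt : jfind f z < m.1 + 1 := by
      have hj := jfind_lt f z; rwa [hr] at hj
    have hkey : f^[m.1 + 1] z = f^[jfind f z] z := by
      rw [← hr]; exact jfind_spec f z
    rw [hi, hkey, show f^[jfind f z] z = x.1 ⟨jfind f z, hjlt⟩ from hx ⟨jfind f z, hjlt⟩]
    exact mem_S.2 ⟨_, rfl⟩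

include hr hx in
lemma orbit_f : ∀ a, f^[a] z ∈ univ.map x.1 :=
  iterate_mem_of_closed (S_closed_f hr hx) (mem_S.2 ⟨0, (hx 0).symm⟩)

include hconn hr hx in
lemma acy_gOf :
    Acy ((univ.map x.1)ᶜ) (fun y => if y ∈ (univ.map x.1)ᶜ then f y else y) := by
  intro w hw
  have hwf : cyc ((univ.map x.1)ᶜ) f w := by
    refine cyc_congr (fun y' hy' => ?_) hw
    exact if_pos hy'
  obtain ⟨k, hk, hfix, hmem⟩ := hwf
  have hall : ∀ a, f^[a] w ∈ (univ.map x.1)ᶜ := by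
    intro a
    rw [iterate_mod hk hfix]
    exact hmem _ (Nat.mod_lt _ hk)
  obtain ⟨a, b, hab⟩ := (connFun_iff_merge f z).1 hconn w
  have h1 := hall a
  rw [hab] at h1
  exact Finset.mem_compl.1 h1 (orbit_f hr hx b)

end forward

noncomputable def goodEquiv (z : Fin n) (m : Fin n) (x : Emb z m) :
    {f : Fin n → Fin n // ConnFun f ∧ rlen f z = m.1 + 1 ∧
        ∀ i : Fin (m.1 + 1), f^[i.1] z = x.1 i} ≃
      Fin (m.1 + 1) × AcyMaps n ((univ.map x.1)ᶜ) := by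
  refine Equiv.mk
    (fun F => (⟨jfind F.1 z, by have h := jfind_lt F.1 z; rwa [F.2.2.1] at h⟩,
      ⟨fun y => if y ∈ (univ.map x.1)ᶜ then F.1 y else y,
        fun y hy => if_neg hy, acy_gOf F.2.1 F.2.2.1 F.2.2.2⟩))
    (fun pr => ⟨glueC m x pr.1 pr.2.1, glueC_conn x pr.1 pr.2.1 pr.2.2.2,
      glueC_rlen x pr.1 pr.2.1, fun i => by
        rw [glueC_iter x pr.1 pr.2.1 i.1 i.2]⟩)
    ?_ ?_
  · intro F
    obtain ⟨f, hconn, hr, hx⟩ := F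
    apply Subtype.ext
    funext y
    show glueC m x _ _ y = f y
    by_cases hy : y ∈ univ.map x.1
    · obtain ⟨i, rfl⟩ := mem_S.1 hy
      rw [glueC_apply_x]
      have hfx : f (x.1 i) = f^[i.1 + 1] z := by
        rw [← hx i]; exact (iterate_succ_apply' f i.1 z).symm
      rw [stepFn]
      split
      · next h =>
        rw [show x.1 ⟨i.1+1, h⟩ = f^[i.1+1] z from (hx ⟨i.1+1, h⟩).symm]
        exact hfx.symm
      · next h =>
        have hi : i.1 + 1 = m.1 + 1 := by have := i.2; omega
        have hjlt : jfind f z < m.1 + 1 := by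
          have hj := jfind_lt f z; rwa [hr] at hj
        have hkey : f^[m.1 + 1] z = f^[jfind f z] z := by
          rw [← hr]; exact jfind_spec f z
        show x.1 ⟨jfind f z, hjlt⟩ = f (x.1 i)
        rw [show x.1 ⟨jfind f z, hjlt⟩ = f^[jfind f z] z from (hx ⟨jfind f z, hjlt⟩).symm,
          ← hkey]
        have h2 : f^[m.1 + 1] z = f^[i.1 + 1] z := by rw [hi]
        rw [h2]
        exact hfx.symm
    · rw [glueC_apply_nx x _ _ hy]
      show (if y ∈ (univ.map x.1)ᶜ then f y else y) = f y
      rw [if_pos (Finset.mem_compl.2 hy)]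
  · intro pr
    obtain ⟨j, g⟩ := pr
    refine Prod.ext ?_ ?_
    · apply Fin.ext
      show jfind (glueC m x j g.1) z = j.1
      exact glueC_jfind x j g.1
    · apply Subtype.ext
      funext y
      show (if y ∈ (univ.map x.1)ᶜ then glueC m x j g.1 y else y) = g.1 y
      by_cases hy : y ∈ (univ.map x.1)ᶜ
      · rw [if_pos hy, glueC_apply_nx x j g.1 (Finset.mem_compl.1 hy)]
      · rw [if_neg hy, g.2.1 y hy]

----- counting the embeddings -----

noncomputable def embEquiv (z m : Fin n) : Emb z m ≃ (Fin m.1 ↪ {y : Fin n // y ≠ z}) where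
  toFun x := ⟨fun i => ⟨x.1 i.succ, fun h => Fin.succ_ne_zero i (x.1.injective (h.trans x.2.symm))⟩,
    fun i j hij => by
      have h1 : x.1 i.succ = x.1 j.succ := congrArg Subtype.val hij
      exact Fin.succ_injective _ (x.1.injective h1)⟩
  invFun e := ⟨⟨fun i => Fin.cases z (fun i' => (e i').1) i, by
      intro a b hab
      induction a using Fin.cases with
      | zero =>
        induction b using Fin.cases with
        | zero => rfl
        | succ b' =>
          simp only [Fin.cases_zero, Fin.cases_succ] at hab
          exact absurd hab.symm (e b').2
      | succ a' =>
        induction b using Fin.cases with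
        | zero =>
          simp only [Fin.cases_zero, Fin.cases_succ] at hab
          exact absurd hab (e a').2
        | succ b' =>
          simp only [Fin.cases_succ] at hab
          exact congrArg Fin.succ (e.injective (Subtype.ext hab))⟩,
    rfl⟩
  left_inv x := by
    apply Subtype.ext
    apply DFunLike.ext
    intro i
    induction i using Fin.cases with
    | zero => simp only [Fin.cases_zero]; exact x.2.symm
    | succ i' => simp only [Fin.cases_succ]; rfl
  right_inv e := by
    apply DFunLike.ext
    intro i
    apply Subtype.ext
    simp only [Function.Embedding.coeFn_mk, Fin.cases_succ]
    rfl

lemma card_emb (z m : Fin n) : Nat.card (Emb z m) = (n - 1).descFactorial m.1 := by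
  rw [Nat.card_congr (embEquiv z m)]
  letI : Fintype {y : Fin n // y ≠ z} := Fintype.ofFinite _
  letI : Fintype (Fin m.1 ↪ {y : Fin n // y ≠ z}) := Fintype.ofFinite _
  rw [Nat.card_eq_fintype_card, Fintype.card_embedding_eq, Fintype.card_fin]
  congr 1
  have h1 : Fintype.card {y : Fin n // y ≠ z} = n - 1 := by
    have h2 : Fintype.card {y : Fin n // y = z} = 1 := Fintype.card_subtype_eq z
    have h3 := Fintype.card_subtype_compl (fun y : Fin n => y = z)
    rw [h2, Fintype.card_fin] at h3
    rw [← h3]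
  exact h1

----- the master count -----

lemma card_conn (z : Fin n) :
    Nat.card {f : Fin n → Fin n // ConnFun f} =
      ∑ i ∈ range n, (n - 1).descFactorial i * ((i + 1) * MM n (n - (i + 1))) := by
  letI : ∀ (m : Fin n), Fintype (Emb z m) := fun m => Fintype.ofFinite _
  have e := Equiv.sigmaFiberEquiv (fun F : {f : Fin n → Fin n // ConnFun f} => chi F.1 z)
  rw [← Nat.card_congr e, nat_card_sigma']
  have hfib : ∀ p : Σ m : Fin n, Emb z m,
      Nat.card {F : {f : Fin n → Fin n // ConnFun f} // chi F.1 z = p}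
        = (p.1.1 + 1) * MM n (n - (p.1.1 + 1)) := by
    rintro ⟨m, x⟩
    have e1 : {F : {f : Fin n → Fin n // ConnFun f} // chi F.1 z = ⟨m, x⟩} ≃
        {f : Fin n → Fin n // ConnFun f ∧ chi f z = ⟨m, x⟩} :=
      ⟨fun F => ⟨F.1.1, F.1.2, F.2⟩, fun f => ⟨⟨f.1, f.2.1⟩, f.2.2⟩,
        fun F => rfl, fun f => rfl⟩
    have e2 : {f : Fin n → Fin n // ConnFun f ∧ chi f z = ⟨m, x⟩} ≃
        {f : Fin n → Fin n // ConnFun f ∧ rlen f z = m.1 + 1 ∧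
          ∀ i : Fin (m.1 + 1), f^[i.1] z = x.1 i} :=
      Equiv.subtypeEquivRight (fun f => and_congr_right fun _ => chi_iff f z m x)
    rw [Nat.card_congr (e1.trans (e2.trans (goodEquiv z m x))), Nat.card_prod]
    congr 1
    · rw [Nat.card_eq_fintype_card, Fintype.card_fin]
    · rw [card_acyMaps]
      congr 1
      rw [Finset.card_compl, Finset.card_map, Finset.card_univ, Fintype.card_fin,
        Fintype.card_fin]
  rw [Finset.sum_congr rfl (fun p _ => hfib p)]
  rw [← Finset.univ_sigma_univ, Finset.sum_sigma]
  have hterm : ∀ m : Fin n,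
      (∑ _x : Emb z m, (m.1 + 1) * MM n (n - (m.1 + 1)))
        = (n - 1).descFactorial m.1 * ((m.1 + 1) * MM n (n - (m.1 + 1))) := by
    intro m
    rw [Finset.sum_const, Finset.card_univ, smul_eq_mul]
    congr 1
    rw [← card_emb z m, Nat.card_eq_fintype_card]
  rw [Finset.sum_congr rfl (fun m _ => hterm m)]
  exact Fin.sum_univ_eq_sum_range (fun i => (n - 1).descFactorial i * ((i + 1) * MM n (n - (i + 1)))) n

lemma card_conn_mul (hn : 1 ≤ n) :
    Nat.card {f : Fin n → Fin n // ConnFun f} * n =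
      ∑ k ∈ Finset.Icc 1 n, k ^ 2 * (n - 1).descFactorial (k - 1) * n ^ (n - k) := by
  rw [card_conn (⟨0, hn⟩ : Fin n), Finset.sum_mul, sumIcc_shift]
  apply Finset.sum_congr rfl
  intro i hi
  have hi' : i < n := Finset.mem_range.1 hi
  rw [MM_eq_cand (n - (i + 1)) (by omega)]
  rcases Nat.lt_or_ge (i + 1) n with h | h
  · have hc : cand n (n - (i + 1)) = (i + 1) * n ^ (n - (i + 1) - 1) := by
      rw [cand, if_neg (by omega), show n - (n - (i+1)) = i + 1 by omega]
    rw [hc]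
    have hp : n ^ (n - (i + 1) - 1) * n = n ^ (n - (i + 1)) := by
      rw [← pow_succ, show n - (i+1) - 1 + 1 = n - (i+1) by omega]
    calc (n-1).descFactorial i * ((i + 1) * ((i + 1) * n ^ (n - (i + 1) - 1))) * n
        = (i+1) * ((i+1) * ((n-1).descFactorial i * (n ^ (n - (i+1) - 1) * n))) := by ring
      _ = (i+1) * ((i+1) * ((n-1).descFactorial i * n ^ (n - (i+1)))) := by rw [hp]
      _ = (i + 1) ^ 2 * (n-1).descFactorial (i + 1 - 1) * n ^ (n - (i + 1)) := by
          rw [show i + 1 - 1 = i by omega]; ring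
  · have h1 : i + 1 = n := by omega
    have hc : cand n (n - (i + 1)) = 1 := by rw [show n - (i+1) = 0 by omega]; rfl
    rw [hc, show n - (i + 1) = 0 by omega, pow_zero, show i + 1 - 1 = i by omega]
    have h2 : (i : ℕ) + 1 = n := h1
    calc (n-1).descFactorial i * ((i + 1) * 1) * n
        = (n-1).descFactorial i * ((i + 1) * (i + 1)) := by rw [← h2]; ring
      _ = (i + 1) ^ 2 * (n-1).descFactorial i * 1 := by ring

/-- The identity
`Σ_{k=1}^n k²·(n-1)!/(n-k)!·n^(n-k-1) = n^(n-1) + (n-1)!·Σ_{j=0}^{n-2} n^j/j!`,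
stated in the cleared (multiplied by `n`) integer form, where
`(n-1)!/(n-k)! = (n-1).descFactorial (k-1)` and `(n-1)!/j! = (n-1).descFactorial (n-1-j)`;
both sides count the connected endofunctions on `{1,…,n}`. -/
theorem stmt12 (n : ℕ) (hn : 1 ≤ n) :
    (∑ k ∈ Finset.Icc 1 n, k ^ 2 * (n - 1).descFactorial (k - 1) * n ^ (n - k) =
        n ^ n + n * ∑ j ∈ Finset.range (n - 1), (n - 1).descFactorial (n - 1 - j) * n ^ j) ∧
      Nat.card {f : Fin n → Fin n // ConnFun f} * n =
        ∑ k ∈ Finset.Icc 1 n, k ^ 2 * (n - 1).descFactorial (k - 1) * n ^ (n - k) := by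
  exact ⟨partA n hn, card_conn_mul hn⟩
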